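/- There exists a pair of orthogonal 5-cycle systems of order 15: two partitions of the edge set of the complete graph K_15 into cycles of length 5 such that any cycle of the first partition and any cycle of the second partition share at most one edge. -/

import Mathlib

/-- A set of edges `C` forms a cycle of length `l`: there is a graph and a closed walk
which is a cycle, has length `l`, and whose edge set is exactly `C`. -/
def IsCycleEdgeSet {V : Type*} (l : ℕ) (C : Set (Sym2 V)) : Prop :=
  ∃ (G : SimpleGraph V) (x : V) (w : G.Walk x x),
    w.IsCycle ∧ w.length = l ∧ C = {e | e ∈ w.edges}

/-- `D` is a decomposition of the edge set of `G` into cycles of length `l`: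
each member of `D` is the edge set of an `l`-cycle contained in `G`, and every
edge of `G` lies in exactly one member of `D`. -/
def IsCycleDecomposition {V : Type*} (G : SimpleGraph V) (l : ℕ)
    (D : Set (Set (Sym2 V))) : Prop :=
  (∀ C ∈ D, IsCycleEdgeSet l C ∧ C ⊆ G.edgeSet) ∧
  (∀ e ∈ G.edgeSet, ∃! C, C ∈ D ∧ e ∈ C)

/-- Two cycle decompositions are orthogonal if any member of the first and any member
of the second share at most one edge. -/
def OrthogonalDecompositions {V : Type*} (D₁ D₂ : Set (Set (Sym2 V))) : Prop :=
  ∀ C₁ ∈ D₁, ∀ C₂ ∈ D₂, (C₁ ∩ C₂).Subsingleton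

/-! ### Auxiliary definitions -/

/-- The edges of a cycle given as a vertex list. -/
def edgeList (c : List (Fin 15)) : List (Sym2 (Fin 15)) :=
  List.zipWith (fun a b => s(a,b)) c (c.rotate 1)

/-- Natural-number encoding of an edge. -/
def enc (a b : ℕ) : ℕ := if a ≤ b then 15 * a + b else 15 * b + a

/-- Edge list in the natural-number encoding. -/
def edgeListN (c : List ℕ) : List ℕ :=
  List.zipWith enc c (c.rotate 1)

lemma enc_comm (a b : ℕ) : enc a b = enc b a := by
  unfold enc; split_ifs <;> omega

/-- Encoding map on unordered pairs. -/
def φ : Sym2 (Fin 15) → ℕ :=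
  Sym2.lift ⟨fun a b => enc a.val b.val, fun a b => enc_comm _ _⟩

lemma enc_inj {a b c d : ℕ} (ha : a < 15) (hb : b < 15) (hc : c < 15) (hd : d < 15)
    (h : enc a b = enc c d) : (a = c ∧ b = d) ∨ (a = d ∧ b = c) := by
  unfold enc at h; split_ifs at h <;> omega

lemma phi_inj : Function.Injective φ := by
  intro x y
  induction x using Sym2.ind with | _ a b =>
  induction y using Sym2.ind with | _ c d =>
  intro h
  simp only [φ, Sym2.lift_mk] at h
  rw [Sym2.eq_iff]
  rcases enc_inj a.isLt b.isLt c.isLt d.isLt h with ⟨h1, h2⟩ | ⟨h1, h2⟩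
  · exact Or.inl ⟨Fin.ext h1, Fin.ext h2⟩
  · exact Or.inr ⟨Fin.ext h1, Fin.ext h2⟩

lemma edgeList_map (c : List (Fin 15)) :
    (edgeList c).map φ = edgeListN (c.map Fin.val) := by
  unfold edgeList edgeListN
  rw [← List.map_rotate, List.zipWith_map, List.map_zipWith]
  rfl

/-- The cycle systems. -/
def L1 : List (List (Fin 15)) := [[0, 1, 4, 6, 8], [0, 6, 5, 7, 2], [0, 10, 12, 11, 3], [0, 4, 7, 10, 13], [0, 12, 4, 8, 5], [0, 7, 3, 4, 14], [0, 9, 6, 10, 11], [1, 2, 13, 8, 7], [1, 12, 2, 9, 3], [1, 5, 10, 14, 13], [1, 6, 11, 13, 9], [1, 11, 4, 10, 8], [1, 14, 5, 3, 10], [2, 3, 8, 11, 5], [2, 4, 9, 7, 11], [2, 6, 3, 12, 8], [2, 14, 8, 9, 10], [3, 14, 6, 7, 13], [4, 13, 6, 12, 5], [5, 13, 12, 14, 9], [7, 12, 9, 11, 14]]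

def L2 : List (List (Fin 15)) := [[0, 1, 14, 2, 7], [0, 2, 13, 9, 14], [0, 3, 13, 5, 11], [0, 4, 2, 5, 8], [0, 13, 1, 7, 5], [0, 10, 11, 7, 6], [0, 9, 11, 6, 12], [1, 2, 9, 5, 10], [1, 6, 9, 12, 3], [1, 12, 5, 14, 4], [1, 5, 6, 4, 8], [1, 11, 8, 7, 9], [2, 3, 10, 13, 8], [2, 10, 7, 13, 6], [2, 12, 4, 3, 11], [3, 14, 11, 4, 5], [3, 9, 8, 10, 6], [3, 8, 6, 14, 7], [4, 10, 14, 12, 7], [4, 13, 12, 10, 9], [8, 14, 13, 11, 12]]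

def N1 : List (List ℕ) := L1.map (List.map Fin.val)
def N2 : List (List ℕ) := L2.map (List.map Fin.val)

/-- The decompositions as sets of edge sets. -/
def Dset (L : List (List (Fin 15))) : Set (Set (Sym2 (Fin 15))) :=
  {S | ∃ c ∈ L, S = {x | x ∈ edgeList c}}

/-! ### Decidable facts, checked by kernel computation -/

lemma coverN1 : ∀ a b : Fin 15, a ≠ b → ∃ m ∈ N1, enc a.val b.val ∈ edgeListN m := by decide
lemma coverN2 : ∀ a b : Fin 15, a ≠ b → ∃ m ∈ N2, enc a.val b.val ∈ edgeListN m := by decide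

lemma uniqN1 : ∀ m ∈ N1, ∀ m' ∈ N1, ∀ u ∈ edgeListN m, u ∈ edgeListN m' →
    edgeListN m = edgeListN m' := by decide
lemma uniqN2 : ∀ m ∈ N2, ∀ m' ∈ N2, ∀ u ∈ edgeListN m, u ∈ edgeListN m' →
    edgeListN m = edgeListN m' := by decide

lemma orthN : ∀ m ∈ N1, ∀ m' ∈ N2, ∀ u ∈ edgeListN m, u ∈ edgeListN m' →
    ∀ v ∈ edgeListN m, v ∈ edgeListN m' → u = v := by decide

lemma shape1 : ∀ c ∈ L1, c.length = 5 ∧ c.Nodup := by decide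
lemma shape2 : ∀ c ∈ L2, c.length = 5 ∧ c.Nodup := by decide

/-! ### Each member is a 5-cycle -/

lemma cyc5 (a b c d e : Fin 15) (h : ([a, b, c, d, e] : List (Fin 15)).Nodup) :
    IsCycleEdgeSet 5 {x | x ∈ edgeList [a, b, c, d, e]} ∧
    {x | x ∈ edgeList [a, b, c, d, e]} ⊆ (⊤ : SimpleGraph (Fin 15)).edgeSet := by
  simp only [List.nodup_cons, List.mem_cons, List.not_mem_nil, or_false, not_or,
    List.nodup_nil, and_true] at h
  obtain ⟨⟨hab, hac, had, hae⟩, ⟨hbc, hbd, hbe⟩, ⟨hcd, hce⟩, hde⟩ := h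
  have hde : d ≠ e := by simp_all
  have hba : b ≠ a := Ne.symm hab
  have hca : c ≠ a := Ne.symm hac
  have hda : d ≠ a := Ne.symm had
  have hea : e ≠ a := Ne.symm hae
  have hcb : c ≠ b := Ne.symm hbc
  have hdb : d ≠ b := Ne.symm hbd
  have heb : e ≠ b := Ne.symm hbe
  have hdc : d ≠ c := Ne.symm hcd
  have hec : e ≠ c := Ne.symm hce
  have hed : e ≠ d := Ne.symm hde
  have hel : edgeList [a, b, c, d, e] = [s(a,b), s(b,c), s(c,d), s(d,e), s(e,a)] := rfl
  refine ⟨⟨⊤, a,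
    .cons (show (⊤ : SimpleGraph (Fin 15)).Adj a b from hab)
      (.cons (show (⊤ : SimpleGraph (Fin 15)).Adj b c from hbc)
        (.cons (show (⊤ : SimpleGraph (Fin 15)).Adj c d from hcd)
          (.cons (show (⊤ : SimpleGraph (Fin 15)).Adj d e from hde)
            (.cons (show (⊤ : SimpleGraph (Fin 15)).Adj e a from hea) .nil)))),
    ?_, rfl, ?_⟩, ?_⟩
  · rw [SimpleGraph.Walk.isCycle_def]
    refine ⟨?_, by simp, ?_⟩
    · rw [SimpleGraph.Walk.isTrail_def]
      show ([s(a,b), s(b,c), s(c,d), s(d,e), s(e,a)] : List (Sym2 (Fin 15))).Nodup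
      simp only [List.nodup_cons, List.mem_cons, List.not_mem_nil, List.nodup_nil,
        Sym2.eq_iff, not_or]
      simp_all
    · show ([b, c, d, e, a] : List (Fin 15)).Nodup
      simp only [List.nodup_cons, List.mem_cons, List.not_mem_nil, List.nodup_nil, not_or]
      simp_all
  · rw [hel]
    rfl
  · rw [hel]
    intro x hx
    simp only [Set.mem_setOf_eq, List.mem_cons, List.not_mem_nil, or_false] at hx
    rcases hx with rfl | rfl | rfl | rfl | rfl <;>
      simp [SimpleGraph.mem_edgeSet, hab, hbc, hcd, hde, hea]

lemma edgeSet_part (L : List (List (Fin 15))) (hL : ∀ c ∈ L, c.length = 5 ∧ c.Nodup) :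
    ∀ C ∈ Dset L, IsCycleEdgeSet 5 C ∧ C ⊆ (⊤ : SimpleGraph (Fin 15)).edgeSet := by
  rintro C ⟨c, hc, rfl⟩
  obtain ⟨hlen, hnd⟩ := hL c hc
  rcases c with _ | ⟨a, _ | ⟨b, _ | ⟨x, _ | ⟨d, _ | ⟨e, _ | ⟨f, t⟩⟩⟩⟩⟩⟩ <;>
    simp only [List.length] at hlen <;> try omega
  exact cyc5 a b x d e hnd

/-- Membership transfer between Sym2 edges and Nat encodings. -/
lemma mem_transfer {a b : Fin 15} {c : List (Fin 15)} :
    s(a, b) ∈ edgeList c ↔ enc a.val b.val ∈ edgeListN (c.map Fin.val) := by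
  rw [← edgeList_map]
  have : enc a.val b.val = φ s(a, b) := rfl
  rw [this, List.mem_map_of_injective phi_inj]

lemma decomposition_part (L : List (List (Fin 15)))
    (hcover : ∀ a b : Fin 15, a ≠ b →
      ∃ m ∈ L.map (List.map Fin.val), enc a.val b.val ∈ edgeListN m)
    (huniq : ∀ m ∈ L.map (List.map Fin.val), ∀ m' ∈ L.map (List.map Fin.val),
      ∀ u ∈ edgeListN m, u ∈ edgeListN m' → edgeListN m = edgeListN m')
    (hL : ∀ c ∈ L, c.length = 5 ∧ c.Nodup) :
    IsCycleDecomposition (⊤ : SimpleGraph (Fin 15)) 5 (Dset L) := by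
  constructor
  · exact edgeSet_part L hL
  · intro e he
    induction e using Sym2.ind with | _ a b =>
    rw [SimpleGraph.mem_edgeSet, SimpleGraph.top_adj] at he
    obtain ⟨m, hm, hmem⟩ := hcover a b he
    obtain ⟨c, hc, rfl⟩ := List.mem_map.mp hm
    refine ⟨{x | x ∈ edgeList c}, ⟨⟨c, hc, rfl⟩, ?_⟩, ?_⟩
    · exact mem_transfer.mpr hmem
    · rintro C ⟨⟨c', hc', rfl⟩, hmem'⟩
      have h1 : enc a.val b.val ∈ edgeListN (c'.map Fin.val) := mem_transfer.mp hmem'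
      have h2 : edgeListN (c'.map Fin.val) = edgeListN (c.map Fin.val) :=
        huniq _ (List.mem_map_of_mem hc') _ (List.mem_map_of_mem hc) _ h1 hmem
      rw [← edgeList_map, ← edgeList_map] at h2
      have h3 : edgeList c' = edgeList c := List.map_injective_iff.mpr phi_inj h2
      rw [h3]

theorem orthogonal_five_cycle_systems_order_fifteen :
    ∃ D₁ D₂ : Set (Set (Sym2 (Fin 15))),
      IsCycleDecomposition (⊤ : SimpleGraph (Fin 15)) 5 D₁ ∧
      IsCycleDecomposition (⊤ : SimpleGraph (Fin 15)) 5 D₂ ∧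
      OrthogonalDecompositions D₁ D₂ := by
  refine ⟨Dset L1, Dset L2, decomposition_part L1 coverN1 uniqN1 shape1,
    decomposition_part L2 coverN2 uniqN2 shape2, ?_⟩
  rintro C₁ ⟨c₁, hc₁, rfl⟩ C₂ ⟨c₂, hc₂, rfl⟩ x ⟨hx1, hx2⟩ y ⟨hy1, hy2⟩
  induction x using Sym2.ind with | _ a b =>
  induction y using Sym2.ind with | _ a' b' =>
  simp only [Set.mem_setOf_eq] at hx1 hx2 hy1 hy2
  have h := orthN _ (List.mem_map_of_mem hc₁) _ (List.mem_map_of_mem hc₂)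
    _ (mem_transfer.mp hx1) (mem_transfer.mp hx2)
    _ (mem_transfer.mp hy1) (mem_transfer.mp hy2)
  exact phi_inj h
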